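/- Let Λ be a nonnegative random variable with E[Λ^a] < ∞ for some a > 0, and let N be a Cox (mixed Poisson) count with intensity Λ, i.e. Pr(N = n) = E[e^{−Λ} Λⁿ / n!]. Then for every integer m with m > a − 1, Pr(N > m) ≤ E[Λ^a] · Γ(m − a + 1) / Γ(m + 1); consequently Pr(N > m) = O(m^{−a}) as m → ∞. -/

import Mathlib

open MeasureTheory Set

noncomputable section

/-- The mixed Poisson (Cox) weight `p_n = E[e^{-Λ} Λ^n / n!] = Pr(N = n)` of a Cox count
with random nonnegative intensity `Λ` on a probability space `Ω`. -/
def coxWeight {Ω : Type*} [MeasureSpace Ω] (Λ : Ω → ℝ) (n : ℕ) : ℝ :=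
  ∫ ω, Real.exp (-Λ ω) * Λ ω ^ n / (n.factorial : ℝ)

/-- `exp` as a power series. -/
lemma Stmt16.exp_tsum (l : ℝ) : ∑' k : ℕ, l ^ k / (k.factorial : ℝ) = Real.exp l := by
  rw [Real.exp_eq_exp_ℝ, NormedSpace.exp_eq_tsum_div]

/-- Summability of the tail of the Poisson p.m.f. -/
lemma Stmt16.tail_summable (m : ℕ) (l : ℝ) :
    Summable (fun n : ℕ => Real.exp (-l) * l ^ (m+1+n) / ((m+1+n).factorial : ℝ)) := by
  have hinj : Function.Injective (fun n : ℕ => m + 1 + n) := fun x y h => by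
    simpa using h
  have h := (Real.summable_pow_div_factorial l).comp_injective hinj
  simpa [Function.comp, mul_div_assoc] using h.mul_left (Real.exp (-l))

/-- The derivative of the (negated) partial sums of the Poisson p.m.f. -/
lemma Stmt16.hasDeriv_partial (m : ℕ) (t : ℝ) :
    HasDerivAt (fun t : ℝ => -(Real.exp (-t) * ∑ k ∈ Finset.range (m+1), t ^ k / (k.factorial : ℝ)))
      (Real.exp (-t) * t ^ m / (m.factorial : ℝ)) t := by
  have hS : HasDerivAt (fun t : ℝ => ∑ k ∈ Finset.range (m+1), t ^ k / (k.factorial : ℝ))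
      (∑ k ∈ Finset.range m, t ^ k / (k.factorial : ℝ)) t := by
    have h1 : HasDerivAt (fun t : ℝ => ∑ k ∈ Finset.range (m+1), t ^ k / (k.factorial : ℝ))
        (∑ k ∈ Finset.range (m+1), (k : ℝ) * t ^ (k-1) / (k.factorial : ℝ)) t :=
      HasDerivAt.fun_sum fun k _ => (hasDerivAt_pow k t).div_const _
    convert h1 using 1
    rw [Finset.sum_range_succ']
    simp only [Nat.cast_succ, Nat.add_sub_cancel, Nat.factorial_succ, Nat.cast_zero,
      Nat.cast_mul, zero_mul, zero_div, add_zero]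
    refine Finset.sum_congr rfl fun j _ => ?_
    have hj : ((j.factorial : ℝ)) ≠ 0 := Nat.cast_ne_zero.mpr j.factorial_ne_zero
    have : (((j:ℝ) + 1)) ≠ 0 := by positivity
    field_simp
  have hE : HasDerivAt (fun t : ℝ => Real.exp (-t)) (-Real.exp (-t)) t := by
    simpa using (hasDerivAt_neg t).exp
  have := (hE.fun_mul hS).fun_neg
  refine this.congr_deriv (Eq.symm ?_)
  rw [Finset.sum_range_succ]
  field_simp
  ring

/-- The classical incomplete-gamma representation of the Poisson tail. -/
lemma Stmt16.tail_eq (m : ℕ) {l : ℝ} (hl : 0 ≤ l) :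
    ∑' n : ℕ, Real.exp (-l) * l ^ (m+1+n) / ((m+1+n).factorial : ℝ)
      = ∫ t in (0:ℝ)..l, Real.exp (-t) * t ^ m / (m.factorial : ℝ) := by
  have hsum0 : Summable (fun k : ℕ => l ^ k / (k.factorial : ℝ)) :=
    Real.summable_pow_div_factorial l
  have key := hsum0.sum_add_tsum_nat_add (m+1)
  have hL : ∑' n : ℕ, Real.exp (-l) * l ^ (m+1+n) / ((m+1+n).factorial : ℝ)
      = 1 - Real.exp (-l) * ∑ k ∈ Finset.range (m+1), l ^ k / (k.factorial : ℝ) := by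
    have h1 : ∀ n : ℕ, Real.exp (-l) * l ^ (m+1+n) / ((m+1+n).factorial : ℝ)
        = Real.exp (-l) * (l ^ (n+(m+1)) / ((n+(m+1)).factorial : ℝ)) := by
      intro n; rw [add_comm (m+1) n, mul_div_assoc]
    rw [tsum_congr h1, tsum_mul_left]
    have h2 : ∑' n : ℕ, l ^ (n+(m+1)) / ((n+(m+1)).factorial : ℝ)
        = Real.exp l - ∑ k ∈ Finset.range (m+1), l ^ k / (k.factorial : ℝ) := by
      rw [← Stmt16.exp_tsum l]
      linarith [key]
    rw [h2, mul_sub, ← Real.exp_add]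
    simp
  have hR : ∫ t in (0:ℝ)..l, Real.exp (-t) * t ^ m / (m.factorial : ℝ)
      = 1 - Real.exp (-l) * ∑ k ∈ Finset.range (m+1), l ^ k / (k.factorial : ℝ) := by
    have hcont : Continuous fun t : ℝ => Real.exp (-t) * t ^ m / (m.factorial : ℝ) := by
      continuity
    have := intervalIntegral.integral_eq_sub_of_hasDerivAt
      (f := fun t : ℝ => -(Real.exp (-t) * ∑ k ∈ Finset.range (m+1), t ^ k / (k.factorial : ℝ)))
      (fun t _ => Stmt16.hasDeriv_partial m t) (hcont.intervalIntegrable 0 l)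
    rw [this]
    have hS0 : ∑ k ∈ Finset.range (m+1), (0:ℝ) ^ k / (k.factorial : ℝ) = 1 := by
      rw [Finset.sum_range_succ']
      simp
    simp only [neg_zero, Real.exp_zero, hS0, one_mul]
    ring
  rw [hL, hR]

/-- Pointwise (per-`ω`) bound on the Poisson tail via the incomplete gamma integral. -/
lemma Stmt16.tail_le (m : ℕ) {a : ℝ} (ha : 0 < a) (hma : a - 1 < (m:ℝ)) {l : ℝ} (hl : 0 ≤ l) :
    ∑' n : ℕ, Real.exp (-l) * l ^ (m+1+n) / ((m+1+n).factorial : ℝ)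
      ≤ l ^ a * (Real.Gamma ((m:ℝ) - a + 1) / (m.factorial : ℝ)) := by
  have hs : (0:ℝ) < (m:ℝ) - a + 1 := by linarith
  rw [Stmt16.tail_eq m hl, intervalIntegral.integral_of_le hl]
  have hint_gamma : IntegrableOn (fun t : ℝ => Real.exp (-t) * t ^ ((m:ℝ) - a)) (Ioi 0) := by
    have := Real.GammaIntegral_convergent hs
    simpa using this
  have hint_gamma' : IntegrableOn (fun t : ℝ => Real.exp (-t) * t ^ ((m:ℝ) - a)) (Ioc 0 l) :=
    hint_gamma.mono_set Ioc_subset_Ioi_self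
  have hcont : Continuous fun t : ℝ => Real.exp (-t) * t ^ m / (m.factorial : ℝ) := by
    continuity
  have step1 : ∫ t in Ioc 0 l, Real.exp (-t) * t ^ m / (m.factorial : ℝ)
      ≤ ∫ t in Ioc 0 l, l ^ a / (m.factorial : ℝ) * (Real.exp (-t) * t ^ ((m:ℝ) - a)) := by
    refine setIntegral_mono_on hcont.integrableOn_Ioc ((hint_gamma'.const_mul _))
      measurableSet_Ioc ?_
    intro t ht
    obtain ⟨ht0, htl⟩ := ht
    have hrw : t ^ m = t ^ a * t ^ ((m:ℝ) - a) := by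
      rw [← Real.rpow_natCast t m, ← Real.rpow_add ht0]
      ring_nf
    rw [div_eq_mul_inv, div_eq_mul_inv, hrw]
    have h1 : t ^ a ≤ l ^ a := Real.rpow_le_rpow ht0.le htl ha.le
    have h2 : (0:ℝ) ≤ t ^ ((m:ℝ) - a) := Real.rpow_nonneg ht0.le _
    have h3 : (0:ℝ) ≤ Real.exp (-t) := (Real.exp_pos _).le
    have h4 : (0:ℝ) ≤ ((m.factorial : ℝ))⁻¹ := by positivity
    calc Real.exp (-t) * (t ^ a * t ^ ((m:ℝ) - a)) * ((m.factorial : ℝ))⁻¹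
        ≤ Real.exp (-t) * (l ^ a * t ^ ((m:ℝ) - a)) * ((m.factorial : ℝ))⁻¹ := by
          apply mul_le_mul_of_nonneg_right _ h4
          apply mul_le_mul_of_nonneg_left _ h3
          exact mul_le_mul_of_nonneg_right h1 h2
      _ = l ^ a * ((m.factorial : ℝ))⁻¹ * (Real.exp (-t) * t ^ ((m:ℝ) - a)) := by ring
  have step2 : ∫ t in Ioc 0 l, Real.exp (-t) * t ^ ((m:ℝ) - a)
      ≤ ∫ t in Ioi 0, Real.exp (-t) * t ^ ((m:ℝ) - a) := by
    refine setIntegral_mono_set hint_gamma ?_ (HasSubset.Subset.eventuallyLE Ioc_subset_Ioi_self)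
    filter_upwards [self_mem_ae_restrict measurableSet_Ioi] with t ht
    exact mul_nonneg (Real.exp_pos _).le (Real.rpow_nonneg (le_of_lt ht) _)
  have hGamma : ∫ t in Ioi 0, Real.exp (-t) * t ^ ((m:ℝ) - a)
      = Real.Gamma ((m:ℝ) - a + 1) := by
    rw [Real.Gamma_eq_integral hs]
    norm_num
  calc ∫ t in Ioc 0 l, Real.exp (-t) * t ^ m / (m.factorial : ℝ)
      ≤ ∫ t in Ioc 0 l, l ^ a / (m.factorial : ℝ) * (Real.exp (-t) * t ^ ((m:ℝ) - a)) := step1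
    _ = l ^ a / (m.factorial : ℝ) * ∫ t in Ioc 0 l, Real.exp (-t) * t ^ ((m:ℝ) - a) := by
        rw [integral_const_mul]
    _ ≤ l ^ a / (m.factorial : ℝ) * Real.Gamma ((m:ℝ) - a + 1) := by
        rw [← hGamma]
        apply mul_le_mul_of_nonneg_left step2
        positivity
    _ = l ^ a * (Real.Gamma ((m:ℝ) - a + 1) / (m.factorial : ℝ)) := by ring

/-- The first claim: the Cox tail bound. -/
lemma Stmt16.part1 {Ω : Type*} [MeasureSpace Ω] [IsProbabilityMeasure (volume : Measure Ω)]
    (Λ : Ω → ℝ) (hmeas : Measurable Λ) (hpos : ∀ ω, 0 ≤ Λ ω)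
    (a : ℝ) (ha : 0 < a) (hmom : Integrable (fun ω => Λ ω ^ a))
    (m : ℕ) (hm : a - 1 < (m : ℝ)) :
    ∑' n : ℕ, coxWeight Λ (m + 1 + n) ≤
      (∫ ω, Λ ω ^ a) * Real.Gamma ((m : ℝ) - a + 1) / Real.Gamma ((m : ℝ) + 1) := by
  set C : ℝ := Real.Gamma ((m:ℝ) - a + 1) / (m.factorial : ℝ) with hC
  have hs : (0:ℝ) < (m:ℝ) - a + 1 := by linarith
  have hCpos : 0 ≤ C := by
    have := Real.Gamma_pos_of_pos hs
    positivity
  set f : ℕ → Ω → ℝ := fun n ω => Real.exp (-Λ ω) * Λ ω ^ (m+1+n) / ((m+1+n).factorial : ℝ)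
    with hf
  have hf_nonneg : ∀ n ω, 0 ≤ f n ω := by intro n ω; have := hpos ω; positivity
  have hf_meas : ∀ n, Measurable (f n) := fun n =>
    ((hmeas.neg.exp.mul (hmeas.pow_const _)).div_const _)
  have hsummable : ∀ ω, Summable (fun n => f n ω) := fun ω => Stmt16.tail_summable m (Λ ω)
  have hbound : ∀ ω, ∑' n, f n ω ≤ Λ ω ^ a * C := fun ω => Stmt16.tail_le m ha hm (hpos ω)
  have hint_bound : Integrable (fun ω => Λ ω ^ a * C) := hmom.mul_const C
  have hf_int : ∀ n, Integrable (f n) := by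
    intro n
    refine hint_bound.mono ((hf_meas n).aestronglyMeasurable) ?_
    filter_upwards with ω
    rw [Real.norm_eq_abs, abs_of_nonneg (hf_nonneg n ω), Real.norm_eq_abs]
    exact le_trans (Summable.le_tsum (hsummable ω) n (fun i _ => hf_nonneg i ω))
      (le_trans (hbound ω) (le_abs_self _))
  have hpartial : ∀ s : Finset ℕ, ∑ n ∈ s, coxWeight Λ (m+1+n) ≤ ∫ ω, Λ ω ^ a * C := by
    intro s
    have h1 : ∑ n ∈ s, coxWeight Λ (m+1+n) = ∫ ω, ∑ n ∈ s, f n ω := by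
      rw [integral_finset_sum s (fun n _ => hf_int n)]
      rfl
    rw [h1]
    refine integral_mono (integrable_finset_sum s (fun n _ => hf_int n)) hint_bound ?_
    intro ω
    exact le_trans (Summable.sum_le_tsum s (fun i _ => hf_nonneg i ω) (hsummable ω)) (hbound ω)
  have hc0 : 0 ≤ ∫ ω, Λ ω ^ a * C :=
    integral_nonneg fun ω => mul_nonneg (Real.rpow_nonneg (hpos ω) a) hCpos
  have := tsum_le_of_sum_le' (L := SummationFilter.unconditional ℕ) hc0 hpartial
  calc ∑' n : ℕ, coxWeight Λ (m + 1 + n) ≤ ∫ ω, Λ ω ^ a * C := this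
    _ = (∫ ω, Λ ω ^ a) * C := by rw [integral_mul_const]
    _ = (∫ ω, Λ ω ^ a) * Real.Gamma ((m : ℝ) - a + 1) / Real.Gamma ((m : ℝ) + 1) := by
        rw [hC, Real.Gamma_nat_eq_factorial]
        ring

lemma Stmt16.fact_lb (j k : ℕ) : ((j.factorial : ℝ)) * ((j:ℝ)+1)^k ≤ ((j+k).factorial : ℝ) := by
  induction k with
  | zero => simp
  | succ k ih =>
    have h1 : ((j+(k+1)).factorial : ℝ) = ((j+k:ℕ)+1 : ℝ) * ((j+k).factorial : ℝ) := by
      rw [show j+(k+1) = (j+k)+1 by ring, Nat.factorial_succ]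
      push_cast; ring
    rw [h1, pow_succ]
    have h2 : ((j:ℝ)+1) ≤ ((j+k:ℕ):ℝ)+1 := by push_cast; linarith [Nat.cast_nonneg (α := ℝ) k]
    have h3 : (0:ℝ) ≤ (j.factorial:ℝ) * ((j:ℝ)+1)^k := by positivity
    calc (j.factorial:ℝ) * (((j:ℝ)+1)^k * ((j:ℝ)+1))
        = ((j.factorial:ℝ) * ((j:ℝ)+1)^k) * ((j:ℝ)+1) := by ring
      _ ≤ ((j+k).factorial : ℝ) * (((j+k:ℕ):ℝ)+1) := by
          apply mul_le_mul ih h2 (by positivity) (by positivity)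
      _ = ((j+k:ℕ)+1 : ℝ) * ((j+k).factorial : ℝ) := by ring

/-- Log-convexity step (Gautschi-type bound): `Γ(x+b) ≤ Γ(x) x^b` for `0 ≤ b ≤ 1`. -/
lemma Stmt16.gamma_interp {x b : ℝ} (hx : 0 < x) (hb0 : 0 ≤ b) (hb1 : b ≤ 1) :
    Real.Gamma (x + b) ≤ Real.Gamma x * x ^ b := by
  have hx1 : (0:ℝ) < x + 1 := by linarith
  have hmem0 : x ∈ Ioi (0:ℝ) := hx
  have hmem1 : x + 1 ∈ Ioi (0:ℝ) := hx1
  have hsum : (1 - b) + b = 1 := by ring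
  have hconv := Real.convexOn_log_Gamma.2 hmem0 hmem1 (by linarith) hb0 hsum
  simp only [smul_eq_mul, Function.comp] at hconv
  have hcomb : (1 - b) * x + b * (x + 1) = x + b := by ring
  rw [hcomb] at hconv
  have hΓ0 : 0 < Real.Gamma x := Real.Gamma_pos_of_pos hx
  have hΓ1 : 0 < Real.Gamma (x + 1) := Real.Gamma_pos_of_pos hx1
  have hΓb : 0 < Real.Gamma (x + b) := Real.Gamma_pos_of_pos (by linarith)
  have key : Real.Gamma (x + b) ≤ Real.Gamma x ^ (1-b) * Real.Gamma (x+1) ^ b := by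
    rw [← Real.exp_log hΓb, ← Real.exp_log hΓ0, ← Real.exp_log hΓ1,
      ← Real.exp_mul, ← Real.exp_mul, ← Real.exp_add]
    apply Real.exp_le_exp.mpr
    calc Real.log (Real.Gamma (x+b)) ≤ (1-b) * Real.log (Real.Gamma x)
          + b * Real.log (Real.Gamma (x+1)) := hconv
      _ = Real.log (Real.Gamma x) * (1-b) + Real.log (Real.Gamma (x+1)) * b := by ring
  have hΓadd : Real.Gamma (x + 1) = x * Real.Gamma x := Real.Gamma_add_one hx.ne'
  calc Real.Gamma (x + b) ≤ Real.Gamma x ^ (1-b) * Real.Gamma (x+1) ^ b := key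
    _ = Real.Gamma x ^ (1-b) * (x ^ b * Real.Gamma x ^ b) := by
        rw [hΓadd, Real.mul_rpow hx.le hΓ0.le]
    _ = (Real.Gamma x ^ (1-b) * Real.Gamma x ^ b) * x ^ b := by ring
    _ = Real.Gamma x * x ^ b := by
        rw [← Real.rpow_add hΓ0]
        norm_num

/-- Asymptotics of the Gamma ratio: for `m ≥ 2⌈a⌉`, `Γ(m-a+1)/Γ(m+1) ≤ 2^a m^{-a}`. -/
lemma Stmt16.gamma_ratio {a : ℝ} (ha : 0 < a) (m : ℕ) (hm : 2 * ⌈a⌉₊ ≤ m) :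
    Real.Gamma ((m:ℝ) - a + 1) / Real.Gamma ((m:ℝ) + 1) ≤ 2 ^ a * (m:ℝ) ^ (-a) := by
  set k : ℕ := ⌈a⌉₊ with hk
  have hk1 : 1 ≤ k := Nat.one_le_iff_ne_zero.mpr (by
    simp only [hk, ne_eq, Nat.ceil_eq_zero, not_le]; exact ha)
  have hak : a ≤ (k:ℝ) := Nat.le_ceil a
  have hka : (k:ℝ) < a + 1 := Nat.ceil_lt_add_one ha.le
  have hkm : k ≤ m := le_trans (by omega) hm
  have hm1 : 1 ≤ m := le_trans hk1 hkm
  set b : ℝ := (k:ℝ) - a with hb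
  have hb0 : 0 ≤ b := by simp [hb]; linarith
  have hb1 : b ≤ 1 := by simp [hb]; linarith
  have hcast : ((m-k:ℕ):ℝ) = (m:ℝ) - (k:ℝ) := by
    push_cast [Nat.cast_sub hkm]; ring
  set x : ℝ := ((m-k:ℕ):ℝ) + 1 with hxdef
  have hx : 0 < x := by positivity
  have hΓx : Real.Gamma x = (((m-k).factorial : ℕ):ℝ) := Real.Gamma_nat_eq_factorial (m-k)
  have hΓm : Real.Gamma ((m:ℝ) + 1) = ((m.factorial : ℕ):ℝ) := Real.Gamma_nat_eq_factorial m
  have h1 : Real.Gamma ((m:ℝ) - a + 1) ≤ Real.Gamma x * x ^ b := by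
    have : (m:ℝ) - a + 1 = x + b := by rw [hxdef, hcast, hb]; ring
    rw [this]
    exact Stmt16.gamma_interp hx hb0 hb1
  have h2 : (((m-k).factorial : ℕ):ℝ) * x ^ (k:ℕ) ≤ ((m.factorial : ℕ):ℝ) := by
    have := Stmt16.fact_lb (m-k) k
    rwa [Nat.sub_add_cancel hkm] at this
  have hmfac : (0:ℝ) < ((m.factorial : ℕ):ℝ) := by positivity
  have hxb : (0:ℝ) ≤ Real.Gamma x * x ^ b :=
    mul_nonneg (Real.Gamma_pos_of_pos hx).le (Real.rpow_nonneg hx.le _)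
  have hden : (0:ℝ) < (((m-k).factorial : ℕ):ℝ) * x ^ (k:ℕ) := by positivity
  have step : Real.Gamma ((m:ℝ) - a + 1) / Real.Gamma ((m:ℝ) + 1)
      ≤ (Real.Gamma x * x ^ b) / ((((m-k).factorial : ℕ):ℝ) * x ^ (k:ℕ)) := by
    rw [hΓm]
    exact div_le_div₀ hxb h1 hden h2
  have hratio : (Real.Gamma x * x ^ b) / ((((m-k).factorial : ℕ):ℝ) * x ^ (k:ℕ))
      = x ^ (-a) := by
    rw [hΓx, ← Real.rpow_natCast x k]
    rw [mul_div_mul_left _ _ (by positivity : (((m-k).factorial : ℕ):ℝ) ≠ 0)]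
    rw [← Real.rpow_sub hx]
    congr 1
    rw [hb]; ring
  have hxm : (m:ℝ)/2 ≤ x := by
    rw [hxdef, hcast]
    have : (k:ℝ) ≤ (m:ℝ)/2 := by
      have : (2*k : ℕ) ≤ m := hm
      have h2k : ((2*k:ℕ):ℝ) ≤ (m:ℝ) := Nat.cast_le.mpr this
      push_cast at h2k
      linarith
    linarith
  have hlast : x ^ (-a) ≤ 2 ^ a * (m:ℝ) ^ (-a) := by
    have hm2 : (0:ℝ) < (m:ℝ)/2 := by
      have : (0:ℝ) < (m:ℝ) := by exact_mod_cast hm1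
      linarith
    have h1' : x ^ (-a) ≤ ((m:ℝ)/2) ^ (-a) :=
      Real.rpow_le_rpow_of_nonpos hm2 hxm (by linarith)
    have h2' : ((m:ℝ)/2) ^ (-a) = 2 ^ a * (m:ℝ) ^ (-a) := by
      rw [Real.div_rpow (by positivity) (by norm_num : (0:ℝ) ≤ 2)]
      rw [Real.rpow_neg (by norm_num : (0:ℝ) ≤ 2)]
      field_simp
    linarith
  calc Real.Gamma ((m:ℝ) - a + 1) / Real.Gamma ((m:ℝ) + 1)
      ≤ (Real.Gamma x * x ^ b) / ((((m-k).factorial : ℕ):ℝ) * x ^ (k:ℕ)) := step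
    _ = x ^ (-a) := hratio
    _ ≤ 2 ^ a * (m:ℝ) ^ (-a) := hlast

/-- tail bound for a Cox (mixed Poisson) count. If `Λ ≥ 0` has
`E[Λ^a] < ∞` for some `a > 0` and `N` is the mixed Poisson count with intensity `Λ`,
then `Pr(N > m) ≤ E[Λ^a] Γ(m - a + 1)/Γ(m + 1)` for every integer `m > a - 1`;
consequently `Pr(N > m) = O(m^{-a})` as `m → ∞`. -/
theorem stmt_16 {Ω : Type*} [MeasureSpace Ω] [IsProbabilityMeasure (volume : Measure Ω)]
    (Λ : Ω → ℝ) (hmeas : Measurable Λ) (hpos : ∀ ω, 0 ≤ Λ ω)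
    (a : ℝ) (ha : 0 < a) (hmom : Integrable (fun ω => Λ ω ^ a)) :
    (∀ m : ℕ, a - 1 < (m : ℝ) →
      ∑' n : ℕ, coxWeight Λ (m + 1 + n) ≤
        (∫ ω, Λ ω ^ a) * Real.Gamma ((m : ℝ) - a + 1) / Real.Gamma ((m : ℝ) + 1)) ∧
    ∃ C > (0 : ℝ), ∃ m₀ : ℕ, ∀ m : ℕ, m₀ ≤ m →
      ∑' n : ℕ, coxWeight Λ (m + 1 + n) ≤ C * (m : ℝ) ^ (-a) := by
  have hE : 0 ≤ ∫ ω, Λ ω ^ a := integral_nonneg fun ω => Real.rpow_nonneg (hpos ω) a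
  constructor
  · intro m hm
    exact Stmt16.part1 Λ hmeas hpos a ha hmom m hm
  · refine ⟨(∫ ω, Λ ω ^ a) * 2 ^ a + 1, by positivity, 2 * ⌈a⌉₊, fun m hm => ?_⟩
    have hk1 : 1 ≤ ⌈a⌉₊ := Nat.one_le_iff_ne_zero.mpr (by
      simp only [ne_eq, Nat.ceil_eq_zero, not_le]; exact ha)
    have hkm : ⌈a⌉₊ ≤ m := le_trans (by omega) hm
    have hm1 : 1 ≤ m := le_trans hk1 hkm
    have hma : a - 1 < (m : ℝ) := by
      have h1 : a ≤ (⌈a⌉₊ : ℝ) := Nat.le_ceil a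
      have h2 : ((⌈a⌉₊ : ℕ) : ℝ) ≤ (m : ℝ) := Nat.cast_le.mpr hkm
      linarith
    have hmr : (0:ℝ) < (m:ℝ) := by exact_mod_cast hm1
    have hmpow : (0:ℝ) < (m:ℝ) ^ (-a) := Real.rpow_pos_of_pos hmr _
    calc ∑' n : ℕ, coxWeight Λ (m + 1 + n)
        ≤ (∫ ω, Λ ω ^ a) * Real.Gamma ((m : ℝ) - a + 1) / Real.Gamma ((m : ℝ) + 1) :=
          Stmt16.part1 Λ hmeas hpos a ha hmom m hma
      _ = (∫ ω, Λ ω ^ a) * (Real.Gamma ((m : ℝ) - a + 1) / Real.Gamma ((m : ℝ) + 1)) := by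
          ring
      _ ≤ (∫ ω, Λ ω ^ a) * (2 ^ a * (m:ℝ) ^ (-a)) :=
          mul_le_mul_of_nonneg_left (Stmt16.gamma_ratio ha m hm) hE
      _ = ((∫ ω, Λ ω ^ a) * 2 ^ a) * (m:ℝ) ^ (-a) := by ring
      _ ≤ ((∫ ω, Λ ω ^ a) * 2 ^ a + 1) * (m:ℝ) ^ (-a) := by
          apply mul_le_mul_of_nonneg_right _ hmpow.le
          linarith
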